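/- Under the hypotheses of the augmented Hodge decomposition, the kinetic energy does not increase: if ρU* = ρU + ∇p in Ω, m v* = m v − ∫_Γ p n dS, 𝕀 ω* = 𝕀 ω − ∫_Γ p J dS, where U is divergence-free with U·n = v·n + ω·J on Γ and U·n = 0 on Γ', then E* := ∫_Ω ½ρ|U*|² dx + ½m|v*|² + ½ω*·𝕀ω* ≥ ∫_Ω ½ρ|U|² dx + ½m|v|² + ½ω·𝕀ω =: E. -/

import Mathlib

open MeasureTheory Matrix

/-- Cross product of vectors in `ℝ³`. -/
def cross3 (u v : Fin 3 → ℝ) : Fin 3 → ℝ :=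
  ![u 1 * v 2 - u 2 * v 1, u 2 * v 0 - u 0 * v 2, u 0 * v 1 - u 1 * v 0]

/-- Gradient of a scalar field on `ℝ³`. -/
noncomputable def grad3 (p : (Fin 3 → ℝ) → ℝ) (x : Fin 3 → ℝ) : Fin 3 → ℝ :=
  fun i => fderiv ℝ p x (Pi.single i 1)

lemma trace_pi_eq (f : (Fin 3 → ℝ) →ₗ[ℝ] (Fin 3 → ℝ)) :
    LinearMap.trace ℝ (Fin 3 → ℝ) f = ∑ i, f (Pi.single i 1) i := by
  rw [LinearMap.trace_eq_matrix_trace ℝ (Pi.basisFun ℝ (Fin 3))]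
  simp [Matrix.trace, Matrix.diag, LinearMap.toMatrix_apply]

lemma trace_fderiv_smul_field (p : (Fin 3 → ℝ) → ℝ) (U : (Fin 3 → ℝ) → (Fin 3 → ℝ))
    (x : Fin 3 → ℝ) (hp : DifferentiableAt ℝ p x) (hU : DifferentiableAt ℝ U x) :
    LinearMap.trace ℝ (Fin 3 → ℝ)
        (fderiv ℝ (fun y => p y • U y) x : (Fin 3 → ℝ) →ₗ[ℝ] (Fin 3 → ℝ))
      = U x ⬝ᵥ grad3 p x
        + p x * LinearMap.trace ℝ (Fin 3 → ℝ)
            (fderiv ℝ U x : (Fin 3 → ℝ) →ₗ[ℝ] (Fin 3 → ℝ)) := by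
  rw [fderiv_fun_smul hp hU]
  simp only [trace_pi_eq, ContinuousLinearMap.coe_coe, ContinuousLinearMap.add_apply,
    ContinuousLinearMap.coe_smul', Pi.smul_apply, ContinuousLinearMap.smulRight_apply,
    smul_eq_mul, Pi.add_apply]
  rw [Finset.sum_add_distrib, Finset.mul_sum]
  simp only [dotProduct, grad3, mul_comm]
  ring

lemma restrict_null_of_disjoint {α : Type*} [MeasurableSpace α] {μ : Measure α}
    {s A : Set α} (hs : μ s ≠ ⊤) (hA : MeasurableSet A) (hd : Disjoint A s) :
    μ.restrict s A = 0 := by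
  rw [← Measure.restrict_toMeasurable hs, Measure.restrict_apply hA]
  have h1 : s ⊆ toMeasurable μ s \ A :=
    Set.subset_diff.2 ⟨subset_toMeasurable μ s, hd.symm⟩
  have h2 : μ (toMeasurable μ s \ A) = μ (toMeasurable μ s) :=
    le_antisymm (measure_mono Set.diff_subset)
      (by rw [measure_toMeasurable]; exact measure_mono h1)
  have h3 := measure_diff_add_inter (μ := μ) (toMeasurable μ s) hA
  rw [h2] at h3
  have hfin' : μ (toMeasurable μ s) ≠ ⊤ := by rw [measure_toMeasurable]; exact hs
  have h4 : μ (toMeasurable μ s) + μ (toMeasurable μ s ∩ A)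
      = μ (toMeasurable μ s) + 0 := by rw [add_zero]; exact h3
  have := (ENNReal.add_right_inj hfin').mp h4
  rwa [Set.inter_comm] at this

lemma ae_restrict_zero_of_eqOn_zero {α : Type*} [MeasurableSpace α] {μ : Measure α}
    {s : Set α} {f : α → ℝ} (hs : μ s ≠ ⊤) (h0 : ∀ x ∈ s, f x = 0)
    (hm : AEStronglyMeasurable f (μ.restrict s)) : f =ᵐ[μ.restrict s] 0 := by
  obtain ⟨g, hg, hfg⟩ := hm
  set N := toMeasurable (μ.restrict s) {x | f x ≠ g x} with hNdef
  have hN0 : (μ.restrict s) N = 0 := by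
    rw [hNdef, measure_toMeasurable]; exact hfg
  have hNsub : {x | f x ≠ g x} ⊆ N := subset_toMeasurable _ _
  have hAmeas : MeasurableSet ({x | g x ≠ 0} \ N) := by
    have : MeasurableSet {x | g x ≠ 0} := by
      have := hg.measurable (MeasurableSet.singleton (0 : ℝ))
      exact this.compl
    exact this.diff (measurableSet_toMeasurable _ _)
  have hdisj : Disjoint ({x | g x ≠ 0} \ N) s := by
    rw [Set.disjoint_left]
    rintro x ⟨hgx, hxN⟩ hxs
    have hfx : f x = 0 := h0 x hxs
    have : f x = g x := by
      by_contra hne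
      exact hxN (hNsub hne)
    exact hgx (by rw [← this, hfx])
  have hA0 : (μ.restrict s) ({x | g x ≠ 0} \ N) = 0 :=
    restrict_null_of_disjoint hs hAmeas hdisj
  have hsub : {x | ¬ f x = 0} ⊆ ({x | g x ≠ 0} \ N) ∪ N := by
    intro x hx
    by_cases hxN : x ∈ N
    · exact Or.inr hxN
    · refine Or.inl ⟨?_, hxN⟩
      have : f x = g x := by
        by_contra hne
        exact hxN (hNsub hne)
      show g x ≠ 0
      rw [← this]; exact hx
  exact measure_mono_null hsub (measure_union_null hA0 hN0)

noncomputable def dotCLM (v : Fin 3 → ℝ) : (Fin 3 → ℝ) →L[ℝ] ℝ :=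
  LinearMap.toContinuousLinearMap
    { toFun := fun u => v ⬝ᵥ u
      map_add' := fun a b => dotProduct_add v a b
      map_smul' := fun c a => by simp [dotProduct_smul] }

@[simp] lemma dotCLM_apply (v u : Fin 3 → ℝ) : dotCLM v u = v ⬝ᵥ u := rfl

lemma integral_dot {μ : Measure (Fin 3 → ℝ)} {f : (Fin 3 → ℝ) → (Fin 3 → ℝ)}
    (hf : Integrable f μ) (v : Fin 3 → ℝ) :
    ∫ x, v ⬝ᵥ f x ∂μ = v ⬝ᵥ ∫ x, f x ∂μ := by
  have := (dotCLM v).integral_comp_comm hf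
  simpa using this

lemma cross3_dot_ident (v ω y u : Fin 3 → ℝ) :
    (v + cross3 ω y) ⬝ᵥ u = v ⬝ᵥ u + ω ⬝ᵥ cross3 y u := by
  simp [cross3, dotProduct, Fin.sum_univ_three]
  ring

/-- (Stability of the augmented Hodge projection.) If
`ρU* = ρU + ∇p` in `Ω`, `m v* = m v − ∫_Γ p n dS`, `𝕀 ω* = 𝕀 ω − ∫_Γ p J dS`,
where `U` is divergence free with `U·n = v·n + ω·J` on `Γ` and `U·n = 0` on `Γ'`
(`J(x) = (x−c) × n(x)`), then the kinetic energy does not increase: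
`E* = ∫_Ω ½ρ|U*|² dx + ½m|v*|² + ½ω*·𝕀ω* ≥ ∫_Ω ½ρ|U|² dx + ½m|v|² + ½ω·𝕀ω = E`. -/
theorem augmented_hodge_projection_energy_stable
    (Ω : Set (Fin 3 → ℝ)) (hopen : IsOpen Ω) (hbd : Bornology.IsBounded Ω)
    (Γ Γ' : Set (Fin 3 → ℝ)) (hdisj : Disjoint Γ Γ') (hbdry : Γ ∪ Γ' = frontier Ω)
    (σ : Measure (Fin 3 → ℝ)) (hσfin : σ (Γ ∪ Γ') ≠ ⊤)
    (n : (Fin 3 → ℝ) → (Fin 3 → ℝ)) (hunit : ∀ x ∈ Γ ∪ Γ', ∑ i, n x i ^ 2 = 1)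
    (ρ m : ℝ) (hρ : 0 < ρ) (hm : 0 < m)
    (𝕀 : Matrix (Fin 3) (Fin 3) ℝ) (h𝕀 : 𝕀.PosDef)
    (c : Fin 3 → ℝ) (v vstar ω ωstar : Fin 3 → ℝ)
    (U Ustar : (Fin 3 → ℝ) → (Fin 3 → ℝ)) (p : (Fin 3 → ℝ) → ℝ)
    (hU : ContDiff ℝ 1 U) (hp : ContDiff ℝ 1 p)
    -- the augmented Hodge decomposition
    (hdecU : ∀ x ∈ Ω, ρ • Ustar x = ρ • U x + grad3 p x)
    (hdecv : m • vstar = m • v - ∫ x in Γ, p x • n x ∂σ)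
    (hdecω : 𝕀 *ᵥ ωstar = 𝕀 *ᵥ ω - ∫ x in Γ, p x • cross3 (x - c) (n x) ∂σ)
    -- incompressibility and non-penetration conditions
    (hdivfree : ∀ x ∈ Ω,
      LinearMap.trace ℝ (Fin 3 → ℝ) (fderiv ℝ U x : (Fin 3 → ℝ) →ₗ[ℝ] (Fin 3 → ℝ)) = 0)
    (hbcΓ : ∀ x ∈ Γ, U x ⬝ᵥ n x = v ⬝ᵥ n x + ω ⬝ᵥ cross3 (x - c) (n x))
    (hbcΓ' : ∀ x ∈ Γ', U x ⬝ᵥ n x = 0)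
    -- integrability (U, U* ∈ L²(Ω))
    (hint1 : IntegrableOn (fun x => Ustar x ⬝ᵥ Ustar x) Ω)
    (hint2 : IntegrableOn (fun x => U x ⬝ᵥ U x) Ω)
    (hint3 : IntegrableOn (fun x => U x ⬝ᵥ grad3 p x) Ω)
    (hint4 : IntegrableOn (fun x => grad3 p x ⬝ᵥ grad3 p x) Ω)
    (hint5 : IntegrableOn (fun x => p x • n x) Γ σ)
    (hint6 : IntegrableOn (fun x => p x • cross3 (x - c) (n x)) Γ σ)
    -- divergence theorem on the Lipschitz domain Ω
    (hdiv : ∀ F : (Fin 3 → ℝ) → (Fin 3 → ℝ), ContDiff ℝ 1 F →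
      ∫ x in Ω, LinearMap.trace ℝ (Fin 3 → ℝ) (fderiv ℝ F x : (Fin 3 → ℝ) →ₗ[ℝ] (Fin 3 → ℝ))
        = ∫ x in Γ ∪ Γ', F x ⬝ᵥ n x ∂σ) :
    (∫ x in Ω, (1 / 2) * ρ * (Ustar x ⬝ᵥ Ustar x)) + (1 / 2) * m * (vstar ⬝ᵥ vstar)
        + (1 / 2) * (ωstar ⬝ᵥ (𝕀 *ᵥ ωstar))
      ≥ (∫ x in Ω, (1 / 2) * ρ * (U x ⬝ᵥ U x)) + (1 / 2) * m * (v ⬝ᵥ v)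
        + (1 / 2) * (ω ⬝ᵥ (𝕀 *ᵥ ω)) := by
  classical
  set a : Fin 3 → ℝ := ∫ x in Γ, p x • n x ∂σ with ha
  set b : Fin 3 → ℝ := ∫ x in Γ, p x • cross3 (x - c) (n x) ∂σ with hb
  have hΓfin : σ Γ ≠ ⊤ :=
    fun h => hσfin (top_le_iff.mp (h ▸ measure_mono Set.subset_union_left))
  have hEmeas : MeasurableSet (Γ ∪ Γ') := by
    rw [hbdry]; exact isClosed_frontier.measurableSet
  have hEcompact : IsCompact (Γ ∪ Γ') := by
    rw [hbdry]
    exact Metric.isCompact_of_isClosed_isBounded isClosed_frontier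
      (hbd.closure.subset frontier_subset_closure)
  -- Step A : divergence theorem for p • U
  have hS : ∫ x in Ω, U x ⬝ᵥ grad3 p x
      = ∫ x in Γ ∪ Γ', p x * (U x ⬝ᵥ n x) ∂σ := by
    have hdivU := hdiv (fun x => p x • U x) (hp.smul hU)
    have hAleft : ∫ x in Ω, LinearMap.trace ℝ (Fin 3 → ℝ)
          (fderiv ℝ (fun y => p y • U y) x : (Fin 3 → ℝ) →ₗ[ℝ] (Fin 3 → ℝ))
        = ∫ x in Ω, U x ⬝ᵥ grad3 p x := by
      refine setIntegral_congr_fun hopen.measurableSet (fun x hx => ?_)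
      rw [trace_fderiv_smul_field p U x (hp.differentiable one_ne_zero x)
          (hU.differentiable one_ne_zero x), hdivfree x hx, mul_zero, add_zero]
    have hAright : (fun x => (p x • U x) ⬝ᵥ n x) = fun x => p x * (U x ⬝ᵥ n x) := by
      funext x; rw [smul_dotProduct]; rfl
    rw [← hAleft, hdivU, hAright]
  -- Step B : reduce the boundary integral to Γ
  set t : Set (Fin 3 → ℝ) := toMeasurable σ Γ ∩ (Γ ∪ Γ') with htdef
  have htmeas : MeasurableSet t := (measurableSet_toMeasurable σ Γ).inter hEmeas
  have hΓt : Γ ⊆ t :=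
    Set.subset_inter (subset_toMeasurable σ Γ) Set.subset_union_left
  have htE : t ⊆ Γ ∪ Γ' := Set.inter_subset_right
  have hres : σ.restrict t = σ.restrict Γ := by
    refine le_antisymm ?_ (Measure.restrict_mono hΓt le_rfl)
    have h1 : σ.restrict t ≤ σ.restrict (toMeasurable σ Γ) :=
      Measure.restrict_mono Set.inter_subset_left le_rfl
    rwa [Measure.restrict_toMeasurable hΓfin] at h1
  -- bound for the boundary integrand
  obtain ⟨C, hC⟩ := hEcompact.exists_bound_of_continuousOn
    (f := fun x => |p x| * ∑ i, |U x i|)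
    (Continuous.continuousOn
      ((hp.continuous.abs).mul
        (continuous_finset_sum _ fun i _ => ((continuous_apply i).comp hU.continuous).abs)))
  have hnbound : ∀ x ∈ Γ ∪ Γ', ∀ i, |n x i| ≤ 1 := by
    intro x hx i
    have h1 : (n x i) ^ 2 ≤ 1 := by
      rw [← hunit x hx]
      exact Finset.single_le_sum (f := fun j => n x j ^ 2) (fun j _ => sq_nonneg _)
        (Finset.mem_univ i)
    nlinarith [abs_nonneg (n x i), sq_abs (n x i)]
  have hhle : ∀ x ∈ Γ ∪ Γ', ‖p x * (U x ⬝ᵥ n x)‖ ≤ C := by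
    intro x hx
    have h1 : |U x ⬝ᵥ n x| ≤ ∑ i, |U x i| := by
      refine (Finset.abs_sum_le_sum_abs _ _).trans ?_
      refine Finset.sum_le_sum fun i _ => ?_
      rw [abs_mul]
      exact mul_le_of_le_one_right (abs_nonneg _) (hnbound x hx i)
    have h2 : ‖p x * (U x ⬝ᵥ n x)‖ ≤ |p x| * ∑ i, |U x i| := by
      rw [Real.norm_eq_abs, abs_mul]
      exact mul_le_mul_of_nonneg_left h1 (abs_nonneg _)
    exact h2.trans ((le_abs_self _).trans ((Real.norm_eq_abs _) ▸ hC x hx))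
  haveI hfinmeas : IsFiniteMeasure (σ.restrict t) :=
    ⟨by rw [Measure.restrict_apply_univ]; exact (measure_mono htE).trans_lt hσfin.lt_top⟩
  -- a.e. strong measurability facts on Γ
  have hpn_aesm : AEStronglyMeasurable (fun x => p x • n x) (σ.restrict Γ) :=
    hint5.aestronglyMeasurable
  have hpni : ∀ i : Fin 3,
      AEStronglyMeasurable (fun x => p x * n x i) (σ.restrict Γ) := by
    intro i
    have := (continuous_apply i).comp_aestronglyMeasurable hpn_aesm
    simpa using this
  have hh_sum : (fun x => p x * (U x ⬝ᵥ n x))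
      = fun x => ∑ i, U x i * (p x * n x i) := by
    funext x
    rw [dotProduct, Finset.mul_sum]
    exact Finset.sum_congr rfl fun i _ => by ring
  have hh_aesm : AEStronglyMeasurable (fun x => p x * (U x ⬝ᵥ n x)) (σ.restrict Γ) := by
    rw [hh_sum]
    exact Finset.aestronglyMeasurable_fun_sum _ fun i _ =>
      (((continuous_apply i).comp hU.continuous).aestronglyMeasurable).mul (hpni i)
  have hht : IntegrableOn (fun x => p x * (U x ⬝ᵥ n x)) t σ := by
    refine ⟨?_, ?_⟩
    · rw [hres]; exact hh_aesm
    · refine HasFiniteIntegral.of_bounded (C := C) ?_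
      filter_upwards [ae_restrict_mem htmeas] with x hx
      exact hhle x (htE hx)
  have hzero : ∀ x ∈ (Γ ∪ Γ') \ t, p x * (U x ⬝ᵥ n x) = 0 := by
    rintro x ⟨hxE, hxt⟩
    have hxΓ' : x ∈ Γ' := by
      rcases hxE with hxΓ | hxΓ'
      · exact absurd (hΓt hxΓ) hxt
      · exact hxΓ'
    rw [hbcΓ' x hxΓ', mul_zero]
  have hdmeas : MeasurableSet ((Γ ∪ Γ') \ t) := hEmeas.diff htmeas
  have hhd0 : ∫ x in (Γ ∪ Γ') \ t, p x * (U x ⬝ᵥ n x) ∂σ = 0 := by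
    rw [setIntegral_congr_fun hdmeas hzero]
    simp
  have hhd_int : IntegrableOn (fun x => p x * (U x ⬝ᵥ n x)) ((Γ ∪ Γ') \ t) σ := by
    refine (integrable_zero _ _ _).congr ?_
    filter_upwards [ae_restrict_mem hdmeas] with x hx
    exact (hzero x hx).symm
  have hB : ∫ x in Γ ∪ Γ', p x * (U x ⬝ᵥ n x) ∂σ
      = ∫ x in Γ, p x * (U x ⬝ᵥ n x) ∂σ := by
    have hsplit := setIntegral_union (f := fun x => p x * (U x ⬝ᵥ n x)) (μ := σ)
      Set.disjoint_sdiff_right hdmeas hht hhd_int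
    rw [Set.union_diff_cancel htE] at hsplit
    rw [hsplit, hhd0, add_zero, hres]
  -- Step C : on Γ replace U·n by the rigid velocity
  have hk_aesm : AEStronglyMeasurable
      (fun x => p x * ((v + cross3 ω (x - c)) ⬝ᵥ n x)) (σ.restrict Γ) := by
    have hWc : ∀ i : Fin 3, Continuous (fun x : Fin 3 → ℝ => (v + cross3 ω (x - c)) i) := by
      intro i
      fin_cases i
      · show Continuous fun x : Fin 3 → ℝ => (v + cross3 ω (x - c)) 0
        simp only [Pi.add_apply, cross3, Matrix.cons_val_zero, Pi.sub_apply]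
        fun_prop
      · show Continuous fun x : Fin 3 → ℝ => (v + cross3 ω (x - c)) 1
        simp only [Pi.add_apply, cross3, Matrix.cons_val_one, Matrix.head_cons, Pi.sub_apply]
        fun_prop
      · show Continuous fun x : Fin 3 → ℝ => (v + cross3 ω (x - c)) 2
        simp only [Pi.add_apply, cross3, Matrix.cons_val_two, Matrix.tail_cons,
          Matrix.head_cons, Pi.sub_apply]
        fun_prop
    have heq : (fun x => p x * ((v + cross3 ω (x - c)) ⬝ᵥ n x))
        = fun x => ∑ i, (v + cross3 ω (x - c)) i * (p x * n x i) := by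
      funext x
      rw [dotProduct, Finset.mul_sum]
      exact Finset.sum_congr rfl fun i _ => by ring
    rw [heq]
    exact Finset.aestronglyMeasurable_fun_sum _ fun i _ =>
      ((hWc i).aestronglyMeasurable).mul (hpni i)
  have hCs : ∫ x in Γ, p x * (U x ⬝ᵥ n x) ∂σ
      = ∫ x in Γ, p x * ((v + cross3 ω (x - c)) ⬝ᵥ n x) ∂σ := by
    have hvanish : ∀ x ∈ Γ,
        p x * (U x ⬝ᵥ n x) - p x * ((v + cross3 ω (x - c)) ⬝ᵥ n x) = 0 := by
      intro x hx
      rw [hbcΓ x hx, cross3_dot_ident]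
      ring
    have hdiffaesm : AEStronglyMeasurable
        (fun x => p x * (U x ⬝ᵥ n x) - p x * ((v + cross3 ω (x - c)) ⬝ᵥ n x))
        (σ.restrict Γ) := hh_aesm.sub hk_aesm
    have hae := ae_restrict_zero_of_eqOn_zero hΓfin hvanish hdiffaesm
    refine integral_congr_ae ?_
    filter_upwards [hae] with x hx
    have : p x * (U x ⬝ᵥ n x) - p x * ((v + cross3 ω (x - c)) ⬝ᵥ n x) = 0 := hx
    linarith
  -- Step D : compute the Γ integral
  have hD : ∫ x in Γ, p x * ((v + cross3 ω (x - c)) ⬝ᵥ n x) ∂σ = v ⬝ᵥ a + ω ⬝ᵥ b := by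
    have heq : (fun x => p x * ((v + cross3 ω (x - c)) ⬝ᵥ n x))
        = fun x => v ⬝ᵥ (p x • n x) + ω ⬝ᵥ (p x • cross3 (x - c) (n x)) := by
      funext x
      rw [cross3_dot_ident]
      simp only [dotProduct, Fin.sum_univ_three, Pi.smul_apply, smul_eq_mul, cross3,
        Matrix.cons_val_zero, Matrix.cons_val_one, Matrix.head_cons,
        Matrix.cons_val_two, Matrix.tail_cons]
      ring
    have hi1 : Integrable (fun x => v ⬝ᵥ (p x • n x)) (σ.restrict Γ) := by
      simpa using (dotCLM v).integrable_comp hint5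
    have hi2 : Integrable (fun x => ω ⬝ᵥ (p x • cross3 (x - c) (n x))) (σ.restrict Γ) := by
      simpa using (dotCLM ω).integrable_comp hint6
    rw [heq, integral_add hi1 hi2, integral_dot hint5 v, integral_dot hint6 ω]
  have hIp : ∫ x in Ω, U x ⬝ᵥ grad3 p x = v ⬝ᵥ a + ω ⬝ᵥ b := by
    rw [hS, hB, hCs, hD]
  -- energy expansion in Ω
  have e1 : ∫ x in Ω, 1 / 2 * ρ * (Ustar x ⬝ᵥ Ustar x)
      = (∫ x in Ω, 1 / 2 * ρ * (U x ⬝ᵥ U x)) + (∫ x in Ω, U x ⬝ᵥ grad3 p x)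
        + 1 / (2 * ρ) * ∫ x in Ω, grad3 p x ⬝ᵥ grad3 p x := by
    have hcongr : ∫ x in Ω, 1 / 2 * ρ * (Ustar x ⬝ᵥ Ustar x)
        = ∫ x in Ω, (1 / 2 * ρ * (U x ⬝ᵥ U x) + (U x ⬝ᵥ grad3 p x)
            + 1 / (2 * ρ) * (grad3 p x ⬝ᵥ grad3 p x)) := by
      refine setIntegral_congr_fun hopen.measurableSet (fun x hx => ?_)
      have hsi : ∀ i, Ustar x i = U x i + ρ⁻¹ * grad3 p x i := by
        intro i
        have h := congrFun (hdecU x hx) i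
        simp only [Pi.smul_apply, smul_eq_mul, Pi.add_apply] at h
        field_simp
        linarith
      simp only [dotProduct, Fin.sum_univ_three, hsi]
      field_simp
      ring
    have hadd1 : ∫ x in Ω, (1 / 2 * ρ * (U x ⬝ᵥ U x) + (U x ⬝ᵥ grad3 p x)
          + 1 / (2 * ρ) * (grad3 p x ⬝ᵥ grad3 p x))
        = (∫ x in Ω, (1 / 2 * ρ * (U x ⬝ᵥ U x) + (U x ⬝ᵥ grad3 p x)))
          + ∫ x in Ω, 1 / (2 * ρ) * (grad3 p x ⬝ᵥ grad3 p x) :=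
      integral_add ((hint2.const_mul _).add hint3) (hint4.const_mul _)
    have hadd2 : ∫ x in Ω, (1 / 2 * ρ * (U x ⬝ᵥ U x) + (U x ⬝ᵥ grad3 p x))
        = (∫ x in Ω, 1 / 2 * ρ * (U x ⬝ᵥ U x)) + ∫ x in Ω, U x ⬝ᵥ grad3 p x :=
      integral_add (hint2.const_mul _) hint3
    rw [hcongr, hadd1, hadd2, integral_const_mul, integral_const_mul]
  -- the solid translation energy
  have e2 : 1 / 2 * m * (vstar ⬝ᵥ vstar)
      = 1 / 2 * m * (v ⬝ᵥ v) - v ⬝ᵥ a + 1 / (2 * m) * (a ⬝ᵥ a) := by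
    have hvs : ∀ i, vstar i = v i - m⁻¹ * a i := by
      intro i
      have h := congrFun hdecv i
      simp only [Pi.smul_apply, smul_eq_mul, Pi.sub_apply] at h
      field_simp
      linarith
    simp only [dotProduct, Fin.sum_univ_three, hvs]
    field_simp
    ring
  -- the solid rotation energy
  have hδ : 𝕀 *ᵥ (ωstar - ω) = -b := by
    rw [Matrix.mulVec_sub, hdecω]
    abel
  have hsym' : ∀ i j, 𝕀 i j = 𝕀 j i := by
    intro i j
    have h := congrFun (congrFun h𝕀.1 i) j
    simpa [Matrix.conjTranspose_apply] using h.symm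
  have hsym : ∀ x y : Fin 3 → ℝ, x ⬝ᵥ (𝕀 *ᵥ y) = y ⬝ᵥ (𝕀 *ᵥ x) := by
    intro x y
    simp only [dotProduct, Matrix.mulVec, Fin.sum_univ_three]
    rw [hsym' 0 1, hsym' 0 2, hsym' 1 2]
    ring
  have e3 : 1 / 2 * (ωstar ⬝ᵥ (𝕀 *ᵥ ωstar))
      = 1 / 2 * (ω ⬝ᵥ (𝕀 *ᵥ ω)) - ω ⬝ᵥ b
        + 1 / 2 * ((ωstar - ω) ⬝ᵥ (𝕀 *ᵥ (ωstar - ω))) := by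
    have h1 : ωstar = ω + (ωstar - ω) := by abel
    have h2 : ωstar ⬝ᵥ (𝕀 *ᵥ ωstar)
        = ω ⬝ᵥ (𝕀 *ᵥ ω) + ω ⬝ᵥ (𝕀 *ᵥ (ωstar - ω)) + ((ωstar - ω) ⬝ᵥ (𝕀 *ᵥ ω)
          + (ωstar - ω) ⬝ᵥ (𝕀 *ᵥ (ωstar - ω))) := by
      nth_rewrite 1 [h1]
      nth_rewrite 2 [h1]
      rw [Matrix.mulVec_add, dotProduct_add, add_dotProduct, add_dotProduct]
      ring
    have h3 : ω ⬝ᵥ (𝕀 *ᵥ (ωstar - ω)) = -(ω ⬝ᵥ b) := by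
      rw [hδ, dotProduct_neg]
    have h4 : (ωstar - ω) ⬝ᵥ (𝕀 *ᵥ ω) = -(ω ⬝ᵥ b) := by
      rw [hsym, h3]
    rw [h2, h3, h4]
    ring
  have hδpos : 0 ≤ (ωstar - ω) ⬝ᵥ (𝕀 *ᵥ (ωstar - ω)) := by
    have := h𝕀.posSemidef.dotProduct_mulVec_nonneg (ωstar - ω)
    simpa using this
  have hq : 0 ≤ ∫ x in Ω, grad3 p x ⬝ᵥ grad3 p x :=
    setIntegral_nonneg hopen.measurableSet fun x _ =>
      Finset.sum_nonneg fun i _ => mul_self_nonneg _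
  have haa : 0 ≤ a ⬝ᵥ a := Finset.sum_nonneg fun i _ => mul_self_nonneg _
  have h5 : 0 ≤ 1 / (2 * ρ) * ∫ x in Ω, grad3 p x ⬝ᵥ grad3 p x :=
    mul_nonneg (by positivity) hq
  have h6 : 0 ≤ 1 / (2 * m) * (a ⬝ᵥ a) := mul_nonneg (by positivity) haa
  have h7 : 0 ≤ 1 / 2 * ((ωstar - ω) ⬝ᵥ (𝕀 *ᵥ (ωstar - ω))) :=
    mul_nonneg (by norm_num) hδpos
  rw [ge_iff_le, e1, e2, e3]
  linarith [hIp]
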